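/- Fix d ≥ 2 and 0 < ρ < π/2. Suppose there exist m lines L₁,...,L_m through the origin in ℝ^d such that the angle between any two of them exceeds ρ. Then there exists a set P ⊂ ℝ^d with |P| = 2^m and ∠P < π - ρ (every angle formed by three points of P is less than π - ρ). -/

import Mathlib

open scoped RealInnerProductSpace

lemma pb_geom (C : ℝ) (hC : 1 < C) (K : ℕ) :
    ∑ n ∈ Finset.range K, C ^ n ≤ C ^ K / (C - 1) := by
  rw [geom_sum_eq (by linarith : C ≠ 1) K]
  have h1 : (0:ℝ) < C - 1 := by linarith
  gcongr
  linarith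


set_option maxHeartbeats 1000000 in
lemma pb_angle_lt {V : Type*} [NormedAddCommGroup V] [InnerProductSpace ℝ V]
    {ρ γ δ t s : ℝ} {e f a b : V}
    (he : ‖e‖ = 1) (hf : ‖f‖ = 1) (hef : -γ ≤ ⟪e, f⟫)
    (ht : 0 < t) (hs : 0 < s) (ha : ‖a‖ ≤ δ * t) (hb : ‖b‖ ≤ δ * s)
    (hρ0 : 0 < ρ) (hρ : ρ < Real.pi / 2)
    (hδ0 : 0 < δ) (hδ1 : δ ≤ 1 / 2) (hδ : 6 * δ ≤ Real.cos ρ - γ) :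
    InnerProductGeometry.angle (t • e + a) (s • f + b) < Real.pi - ρ := by
  have hπ := Real.pi_pos
  have hβ0 : 0 < Real.cos ρ := Real.cos_pos_of_mem_Ioo ⟨by linarith, hρ⟩
  have hβ1 : Real.cos ρ ≤ 1 := Real.cos_le_one ρ
  have hte : ‖t • e‖ = t := by
    rw [norm_smul, he, Real.norm_eq_abs, abs_of_pos ht, mul_one]
  have hsf : ‖s • f‖ = s := by
    rw [norm_smul, hf, Real.norm_eq_abs, abs_of_pos hs, mul_one]
  have hva : t - δ * t ≤ ‖t • e + a‖ := by
    have h1 := norm_sub_norm_le (t • e) (-a)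
    rw [sub_neg_eq_add, norm_neg, hte] at h1
    linarith
  have hwa : s - δ * s ≤ ‖s • f + b‖ := by
    have h1 := norm_sub_norm_le (s • f) (-b)
    rw [sub_neg_eq_add, norm_neg, hsf] at h1
    linarith
  have hvpos : (0:ℝ) < ‖t • e + a‖ := lt_of_lt_of_le (by nlinarith) hva
  have hwpos : (0:ℝ) < ‖s • f + b‖ := lt_of_lt_of_le (by nlinarith) hwa
  have hinner : ⟪t • e + a, s • f + b⟫ =
      t * s * ⟪e, f⟫ + t * ⟪e, b⟫ + s * ⟪a, f⟫ + ⟪a, b⟫ := by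
    simp only [inner_add_left, inner_add_right, real_inner_smul_left,
      real_inner_smul_right]
    ring
  have heb : |⟪e, b⟫| ≤ δ * s :=
    (abs_real_inner_le_norm e b).trans (by rw [he, one_mul]; exact hb)
  have haf : |⟪a, f⟫| ≤ δ * t :=
    (abs_real_inner_le_norm a f).trans (by rw [hf, mul_one]; exact ha)
  have hab : |⟪a, b⟫| ≤ (δ * t) * (δ * s) :=
    (abs_real_inner_le_norm a b).trans
      (mul_le_mul ha hb (norm_nonneg _) (by positivity))
  have he1 := (abs_le.1 heb).1
  have he2 := (abs_le.1 haf).1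
  have he3 := (abs_le.1 hab).1
  have hlow : t * s * (-γ) - t * (δ * s) - s * (δ * t) - (δ * t) * (δ * s) ≤
      ⟪t • e + a, s • f + b⟫ := by
    rw [hinner]
    have q1 : t * s * (-γ) ≤ t * s * ⟪e, f⟫ :=
      mul_le_mul_of_nonneg_left hef (by positivity)
    have q2 := mul_le_mul_of_nonneg_left he1 ht.le
    have q3 := mul_le_mul_of_nonneg_left he2 hs.le
    nlinarith
  have hprod : (t - δ * t) * (s - δ * s) ≤ ‖t • e + a‖ * ‖s • f + b‖ :=
    mul_le_mul hva hwa (by nlinarith) (norm_nonneg _)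
  have haux : γ + 2 * δ + δ * δ < Real.cos ρ * (1 - δ) * (1 - δ) := by nlinarith
  have key : -Real.cos ρ * (‖t • e + a‖ * ‖s • f + b‖) < ⟪t • e + a, s • f + b⟫ := by
    have h4 := mul_le_mul_of_nonneg_left hprod hβ0.le
    nlinarith [mul_pos (sub_pos.2 haux) (mul_pos ht hs)]
  have hvw : (0:ℝ) < ‖t • e + a‖ * ‖s • f + b‖ := mul_pos hvpos hwpos
  have hcos : Real.cos (Real.pi - ρ) <
      Real.cos (InnerProductGeometry.angle (t • e + a) (s • f + b)) := by
    rw [Real.cos_pi_sub, InnerProductGeometry.cos_angle, lt_div_iff₀ hvw]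
    exact key
  have h1 : InnerProductGeometry.angle (t • e + a) (s • f + b) ∈ Set.Icc 0 Real.pi :=
    ⟨InnerProductGeometry.angle_nonneg _ _, InnerProductGeometry.angle_le_pi _ _⟩
  have h2 : Real.pi - ρ ∈ Set.Icc 0 Real.pi := ⟨by linarith, by linarith⟩
  exact (Real.strictAntiOn_cos.lt_iff_gt h2 h1).1 hcos
lemma pb_decomp {V : Type*} [NormedAddCommGroup V] [InnerProductSpace ℝ V] {m : ℕ}
    (u : Fin m → V) (hu : ∀ i, ‖u i‖ = 1) (C : ℝ) (hC : 1 < C)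
    (S T : Finset (Fin m)) (hST : S ≠ T) :
    ∃ (k : Fin m) (a : V),
      (∑ i ∈ S, C ^ (i : ℕ) • u i) - (∑ i ∈ T, C ^ (i : ℕ) • u i) =
        C ^ (k : ℕ) • ((if k ∈ T then (-1:ℝ) else 1) • u k) + a ∧
      ‖a‖ ≤ C ^ (k : ℕ) / (C - 1) := by
  have hC0 : (0:ℝ) < C := by linarith
  classical
  set g : Fin m → V := fun i => (if i ∈ T then (-1:ℝ) else 1) • (C ^ (i:ℕ) • u i) with hg
  set D : Finset (Fin m) := (S \ T) ∪ (T \ S) with hD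
  have hsplit : (∑ i ∈ S, C ^ (i : ℕ) • u i) - (∑ i ∈ T, C ^ (i : ℕ) • u i) =
      ∑ i ∈ D, g i := by
    rw [hD, Finset.sum_union disjoint_sdiff_sdiff]
    have e1 : ∑ i ∈ S \ T, g i = ∑ i ∈ S \ T, C ^ (i:ℕ) • u i := by
      apply Finset.sum_congr rfl
      intro i hi
      rw [hg]
      simp [(Finset.mem_sdiff.1 hi).2]
    have e2 : ∑ i ∈ T \ S, g i = -∑ i ∈ T \ S, C ^ (i:ℕ) • u i := by
      rw [← Finset.sum_neg_distrib]
      apply Finset.sum_congr rfl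
      intro i hi
      rw [hg]
      simp [(Finset.mem_sdiff.1 hi).1]
    rw [e1, e2]
    have d1 : ∑ i ∈ S \ (S ∩ T), C ^ (i:ℕ) • u i + ∑ i ∈ S ∩ T, C ^ (i:ℕ) • u i =
        ∑ i ∈ S, C ^ (i:ℕ) • u i := Finset.sum_sdiff Finset.inter_subset_left
    have d2 : ∑ i ∈ T \ (S ∩ T), C ^ (i:ℕ) • u i + ∑ i ∈ S ∩ T, C ^ (i:ℕ) • u i =
        ∑ i ∈ T, C ^ (i:ℕ) • u i := by
      rw [Finset.inter_comm]
      exact Finset.sum_sdiff Finset.inter_subset_left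
    have r1 : S \ (S ∩ T) = S \ T := by
      ext x; simp only [Finset.mem_sdiff, Finset.mem_inter]; tauto
    have r2 : T \ (S ∩ T) = T \ S := by
      ext x; simp only [Finset.mem_sdiff, Finset.mem_inter]; tauto
    rw [r1] at d1
    rw [r2] at d2
    rw [← d1, ← d2]
    abel
  have hDne : D.Nonempty := by
    rw [Finset.nonempty_iff_ne_empty]
    intro h
    apply hST
    have h1 : S \ T = ∅ := Finset.subset_empty.1 (h ▸ Finset.subset_union_left)
    have h2 : T \ S = ∅ := Finset.subset_empty.1 (h ▸ Finset.subset_union_right)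
    exact Finset.Subset.antisymm (Finset.sdiff_eq_empty_iff_subset.1 h1)
      (Finset.sdiff_eq_empty_iff_subset.1 h2)
  set k := D.max' hDne with hk
  refine ⟨k, ∑ i ∈ D.erase k, g i, ?_, ?_⟩
  · rw [hsplit, ← Finset.add_sum_erase D g (D.max'_mem hDne), ← hk]
    congr 1
    rw [hg, smul_comm]
  · calc ‖∑ i ∈ D.erase k, g i‖ ≤ ∑ i ∈ D.erase k, ‖g i‖ := norm_sum_le _ _
      _ = ∑ i ∈ D.erase k, C ^ (i:ℕ) := by
          apply Finset.sum_congr rfl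
          intro i _
          rw [hg]
          have h5 : ‖(if i ∈ T then (-1:ℝ) else 1)‖ = 1 := by
            split <;> simp
          rw [norm_smul, h5, one_mul, norm_smul, hu i, mul_one,
            Real.norm_eq_abs, abs_of_pos (pow_pos hC0 _)]
      _ = ∑ n ∈ (D.erase k).image (fun i : Fin m => (i:ℕ)), C ^ n := by
          rw [Finset.sum_image]
          intro x _ y _ h
          exact Fin.val_injective h
      _ ≤ ∑ n ∈ Finset.range (k:ℕ), C ^ n := by
          apply Finset.sum_le_sum_of_subset_of_nonneg
          · intro n hn
            rw [Finset.mem_image] at hn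
            obtain ⟨i, hi, rfl⟩ := hn
            rw [Finset.mem_range]
            have h1 : i ≠ k := Finset.ne_of_mem_erase hi
            have h2 : i ≤ k := D.le_max' i (Finset.mem_of_mem_erase hi)
            exact lt_of_le_of_ne h2 (by exact_mod_cast fun h => h1 (Fin.val_injective h))
          · intro n _ _
            positivity
      _ ≤ C ^ (k:ℕ) / (C - 1) := pb_geom C hC _

/-- Packing lower bound (Erdős–Füredi): given `m` lines through the origin of `ℝ^d`
(unit vectors `u i`) any two of which make an angle greater than `ρ`, there exists a
set of `2^m` points all of whose angles are less than `π - ρ`. -/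
theorem packing_bound
    (d : ℕ) (hd : 2 ≤ d)
    (ρ : ℝ) (hρ0 : 0 < ρ) (hρ : ρ < Real.pi / 2)
    (m : ℕ) (u : Fin m → EuclideanSpace ℝ (Fin d))
    (hu : ∀ i, ‖u i‖ = 1)
    (hsep : ∀ i j : Fin m, i ≠ j → ρ < Real.arccos |⟪u i, u j⟫|) :
    ∃ P : Finset (EuclideanSpace ℝ (Fin d)), P.card = 2 ^ m ∧
      ∀ x ∈ P, ∀ y ∈ P, ∀ z ∈ P, x ≠ y → z ≠ y →
        EuclideanGeometry.angle x y z < Real.pi - ρ := by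
  classical
  have hπ := Real.pi_pos
  have hβ0 : 0 < Real.cos ρ := Real.cos_pos_of_mem_Ioo ⟨by linarith, hρ⟩
  set γ : ℝ := if h : (Finset.univ.offDiag : Finset (Fin m × Fin m)).Nonempty then
      Finset.univ.offDiag.sup' h (fun p => |⟪u p.1, u p.2⟫|) else 0 with hγdef
  have habs_lt : ∀ i j : Fin m, i ≠ j → |⟪u i, u j⟫| < Real.cos ρ := by
    intro i j hij
    have h1 := hsep i j hij
    have h2 : |⟪u i, u j⟫| ≤ 1 := by
      have h := abs_real_inner_le_norm (u i) (u j)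
      rw [hu i, hu j, one_mul] at h
      exact h
    have h3 : Real.cos (Real.arccos |⟪u i, u j⟫|) = |⟪u i, u j⟫| :=
      Real.cos_arccos (by linarith [abs_nonneg ⟪u i, u j⟫]) h2
    have h4 : Real.cos (Real.arccos |⟪u i, u j⟫|) < Real.cos ρ := by
      apply Real.strictAntiOn_cos ⟨hρ0.le, by linarith⟩
        ⟨Real.arccos_nonneg _, Real.arccos_le_pi _⟩ h1
    rwa [h3] at h4
  have hγlt : γ < Real.cos ρ := by
    rw [hγdef]
    split
    · next h =>
      rw [Finset.sup'_lt_iff]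
      intro q hq
      rw [Finset.mem_offDiag] at hq
      exact habs_lt q.1 q.2 hq.2.2
    · exact hβ0
  have hγ0 : 0 ≤ γ := by
    rw [hγdef]
    split
    · next h =>
      obtain ⟨q, hq⟩ := h
      exact le_trans (abs_nonneg _)
        (Finset.le_sup' (fun q : Fin m × Fin m => |⟪u q.1, u q.2⟫|) hq)
    · exact le_refl 0
  have hγle : ∀ i j : Fin m, i ≠ j → |⟪u i, u j⟫| ≤ γ := by
    intro i j hij
    have hmem : (i, j) ∈ (Finset.univ.offDiag : Finset (Fin m × Fin m)) := by
      rw [Finset.mem_offDiag]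
      exact ⟨Finset.mem_univ _, Finset.mem_univ _, hij⟩
    rw [hγdef, dif_pos ⟨(i, j), hmem⟩]
    exact Finset.le_sup' (fun q : Fin m × Fin m => |⟪u q.1, u q.2⟫|) hmem
  set δ : ℝ := min ((Real.cos ρ - γ) / 6) (1 / 2) with hδdef
  have hδ0 : 0 < δ := lt_min (by linarith) (by norm_num)
  have hδ1 : δ ≤ 1 / 2 := min_le_right _ _
  have hδ6 : 6 * δ ≤ Real.cos ρ - γ := by
    have h := min_le_left ((Real.cos ρ - γ) / 6) (1 / 2)
    rw [← hδdef] at h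
    linarith
  set C : ℝ := 1 + 1 / δ with hCdef
  have hC : 1 < C := by
    rw [hCdef]
    have : 0 < 1 / δ := by positivity
    linarith
  have hC0 : (0:ℝ) < C := by linarith
  have hCδ : ∀ K : ℕ, C ^ K / (C - 1) = δ * C ^ K := by
    intro K
    rw [hCdef]
    have hδne : δ ≠ 0 := ne_of_gt hδ0
    field_simp
    ring
  have hεnorm : ∀ (k : Fin m) (T : Finset (Fin m)),
      ‖(if k ∈ T then (-1:ℝ) else 1) • u k‖ = 1 := by
    intro k T
    have h : ‖(if k ∈ T then (-1:ℝ) else 1)‖ = 1 := by split <;> simp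
    rw [norm_smul, h, one_mul, hu k]
  have pinj : Function.Injective
      (fun S : Finset (Fin m) => ∑ i ∈ S, C ^ (i : ℕ) • u i) := by
    intro S T h
    simp only at h
    by_contra hST
    obtain ⟨k, a, heq, hna⟩ := pb_decomp u hu C hC S T hST
    have h0 : C ^ (k:ℕ) • ((if k ∈ T then (-1:ℝ) else 1) • u k) + a = 0 := by
      rw [← heq, h, sub_self]
    have h1 : C ^ (k:ℕ) • ((if k ∈ T then (-1:ℝ) else 1) • u k) = -a :=
      eq_neg_of_add_eq_zero_left h0
    have h2 : ‖C ^ (k:ℕ) • ((if k ∈ T then (-1:ℝ) else 1) • u k)‖ = C ^ (k:ℕ) := by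
      rw [norm_smul, hεnorm, mul_one, Real.norm_eq_abs, abs_of_pos (pow_pos hC0 _)]
    rw [h1, norm_neg] at h2
    rw [hCδ, ← h2] at hna
    have h3 : (0:ℝ) < C ^ (k:ℕ) := pow_pos hC0 _
    rw [h2] at hna
    nlinarith
  refine ⟨Finset.image (fun S : Finset (Fin m) => ∑ i ∈ S, C ^ (i : ℕ) • u i)
      Finset.univ, ?_, ?_⟩
  · rw [Finset.card_image_of_injective _ pinj, Finset.card_univ, Fintype.card_finset,
      Fintype.card_fin]
  · intro x hx y hy z hz hxy hzy
    rw [Finset.mem_image] at hx hy hz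
    obtain ⟨S, -, rfl⟩ := hx
    obtain ⟨T, -, rfl⟩ := hy
    obtain ⟨R, -, rfl⟩ := hz
    have hST : S ≠ T := fun h => hxy (by rw [h])
    have hRT : R ≠ T := fun h => hzy (by rw [h])
    obtain ⟨k, a, hdk, hna⟩ := pb_decomp u hu C hC S T hST
    obtain ⟨l, b, hdl, hnb⟩ := pb_decomp u hu C hC R T hRT
    have hangle : EuclideanGeometry.angle (∑ i ∈ S, C ^ (i : ℕ) • u i)
        (∑ i ∈ T, C ^ (i : ℕ) • u i) (∑ i ∈ R, C ^ (i : ℕ) • u i) =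
        InnerProductGeometry.angle
          ((∑ i ∈ S, C ^ (i : ℕ) • u i) - (∑ i ∈ T, C ^ (i : ℕ) • u i))
          ((∑ i ∈ R, C ^ (i : ℕ) • u i) - (∑ i ∈ T, C ^ (i : ℕ) • u i)) := rfl
    rw [hangle, hdk, hdl]
    apply pb_angle_lt (hεnorm k T) (hεnorm l T) ?_ (pow_pos hC0 _) (pow_pos hC0 _)
      ?_ ?_ hρ0 hρ hδ0 hδ1 hδ6
    · by_cases hkl : k = l
      · subst hkl
        have h : ⟪(if k ∈ T then (-1:ℝ) else 1) • u k,
            (if k ∈ T then (-1:ℝ) else 1) • u k⟫ = 1 := by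
          rw [real_inner_smul_left, real_inner_smul_right, real_inner_self_eq_norm_sq,
            hu k]
          split <;> norm_num
        rw [h]
        linarith
      · have h1 : |⟪(if k ∈ T then (-1:ℝ) else 1) • u k,
            (if l ∈ T then (-1:ℝ) else 1) • u l⟫| ≤ γ := by
          rw [real_inner_smul_left, real_inner_smul_right, abs_mul, abs_mul]
          have e1 : |(if k ∈ T then (-1:ℝ) else 1)| = 1 := by split <;> simp
          have e2 : |(if l ∈ T then (-1:ℝ) else 1)| = 1 := by split <;> simp
          rw [e1, e2, one_mul, one_mul]
          exact hγle k l hkl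
        have h2 := (abs_le.1 h1).1
        linarith
    · rw [← hCδ]; exact hna
    · rw [← hCδ]; exact hnb
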